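/- Let g(p) = p + a p^α with a ≥ 0 and 0 < α < 1. Define f(t) = 1 + 2 c₀ a t^{1−α}/Γ(2−α) + c₀² a² t^{2(1−α)}/Γ(3−2α) for t > 0 and c₀ > 0. Then f′ is completely monotone on (0,∞) (i.e. f is a Bernstein function) if and only if 1/2 ≤ α < 1. -/

import Mathlib

lemma itd_eq_on {f g : ℝ → ℝ} (h : ∀ x ∈ Set.Ioi (0:ℝ), f x = g x) (k : ℕ) :
    ∀ x ∈ Set.Ioi (0:ℝ), iteratedDeriv k f x = iteratedDeriv k g x := by
  induction k with
  | zero => simpa using h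
  | succ k ih =>
    intro x hx
    rw [iteratedDeriv_succ, iteratedDeriv_succ]
    apply Filter.EventuallyEq.deriv_eq
    filter_upwards [isOpen_Ioi.mem_nhds hx] with y hy using ih y hy

lemma itd_pair (c₁ c₂ r₁ r₂ : ℝ) (k : ℕ) :
    ∀ t ∈ Set.Ioi (0:ℝ), iteratedDeriv k (fun x => c₁ * x ^ r₁ + c₂ * x ^ r₂) t =
      c₁ * (∏ i ∈ Finset.range k, (r₁ - i)) * t ^ (r₁ - k) +
      c₂ * (∏ i ∈ Finset.range k, (r₂ - i)) * t ^ (r₂ - k) := by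
  induction k with
  | zero => intro t ht; simp
  | succ k ih =>
    intro t ht
    rw [iteratedDeriv_succ]
    have h1 : deriv (iteratedDeriv k (fun x => c₁ * x ^ r₁ + c₂ * x ^ r₂)) t
        = deriv (fun x => c₁ * (∏ i ∈ Finset.range k, (r₁ - i)) * x ^ (r₁ - k) +
            c₂ * (∏ i ∈ Finset.range k, (r₂ - i)) * x ^ (r₂ - k)) t := by
      apply Filter.EventuallyEq.deriv_eq
      filter_upwards [isOpen_Ioi.mem_nhds ht] with y hy using ih y hy
    rw [h1]
    have ht' : (t:ℝ) ≠ 0 := ne_of_gt ht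
    have h2 : HasDerivAt (fun x : ℝ => c₁ * (∏ i ∈ Finset.range k, (r₁ - i)) * x ^ (r₁ - k) +
          c₂ * (∏ i ∈ Finset.range k, (r₂ - i)) * x ^ (r₂ - k))
        (c₁ * (∏ i ∈ Finset.range k, (r₁ - i)) * ((r₁ - k) * t ^ (r₁ - k - 1)) +
          c₂ * (∏ i ∈ Finset.range k, (r₂ - i)) * ((r₂ - k) * t ^ (r₂ - k - 1))) t :=
      ((Real.hasDerivAt_rpow_const (Or.inl ht')).const_mul _).add
        ((Real.hasDerivAt_rpow_const (Or.inl ht')).const_mul _)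
    rw [h2.deriv, Finset.prod_range_succ, Finset.prod_range_succ]
    push_cast
    rw [show r₁ - (↑k + 1) = r₁ - ↑k - 1 by ring, show r₂ - (↑k + 1) = r₂ - ↑k - 1 by ring]
    ring

lemma neg_pow_prod (r : ℝ) (k : ℕ) :
    (-1 : ℝ) ^ k * ∏ i ∈ Finset.range k, (r - i) = ∏ i ∈ Finset.range k, ((i : ℝ) - r) := by
  have h : ∀ i ∈ Finset.range k, ((i : ℝ) - r) = (-1) * (r - i) := fun i _ => by ring
  rw [Finset.prod_congr rfl h, Finset.prod_mul_distrib, Finset.prod_const, Finset.card_range]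

theorem szabo_bernstein_iff
    (a c₀ α : ℝ) (ha : 0 < a) (hc₀ : 0 < c₀) (hα : 0 < α) (hα1 : α < 1)
    (f : ℝ → ℝ)
    (hf : ∀ t : ℝ, 0 < t →
      f t = 1 + 2 * c₀ * a * t ^ (1 - α) / Real.Gamma (2 - α) +
        c₀ ^ 2 * a ^ 2 * t ^ (2 * (1 - α)) / Real.Gamma (3 - 2 * α)) :
    (∀ (k : ℕ) (t : ℝ), 0 < t →
        0 ≤ (-1 : ℝ) ^ k * iteratedDeriv k (deriv f) t) ↔ 1 / 2 ≤ α := by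
  set A : ℝ := 2 * c₀ * a / Real.Gamma (2 - α) with hA_def
  set B : ℝ := c₀ ^ 2 * a ^ 2 / Real.Gamma (3 - 2 * α) with hB_def
  have hΓ1 : 0 < Real.Gamma (2 - α) := Real.Gamma_pos_of_pos (by linarith)
  have hΓ2 : 0 < Real.Gamma (3 - 2 * α) := Real.Gamma_pos_of_pos (by linarith)
  have hA : 0 < A := by positivity
  have hB : 0 < B := by positivity
  have hfe : ∀ x ∈ Set.Ioi (0:ℝ), f x = 1 + A * x ^ (1 - α) + B * x ^ (2 * (1 - α)) := by
    intro x hx; rw [hf x hx, hA_def, hB_def]; ring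
  -- derivative of f on positives
  have hder : ∀ x ∈ Set.Ioi (0:ℝ), deriv f x =
      (fun y : ℝ => A * (1 - α) * y ^ (1 - α - 1) + B * (2 * (1 - α)) * y ^ (2 * (1 - α) - 1)) x := by
    intro x hx
    have hx' : (x:ℝ) ≠ 0 := ne_of_gt hx
    have hF : HasDerivAt (fun y : ℝ => 1 + A * y ^ (1 - α) + B * y ^ (2 * (1 - α)))
        (A * (1 - α) * x ^ (1 - α - 1) + B * (2 * (1 - α)) * x ^ (2 * (1 - α) - 1)) x := by
      have := ((hasDerivAt_const x (1:ℝ)).add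
          ((Real.hasDerivAt_rpow_const (p := 1 - α) (Or.inl hx')).const_mul A)).add
          ((Real.hasDerivAt_rpow_const (p := 2 * (1 - α)) (Or.inl hx')).const_mul B)
      refine this.congr_deriv ?_; ring
    have hFf : HasDerivAt f
        (A * (1 - α) * x ^ (1 - α - 1) + B * (2 * (1 - α)) * x ^ (2 * (1 - α) - 1)) x := by
      apply hF.congr_of_eventuallyEq
      filter_upwards [isOpen_Ioi.mem_nhds hx] with y hy using hfe y hy
    exact hFf.deriv
  have key : ∀ (k : ℕ) (t : ℝ), 0 < t → iteratedDeriv k (deriv f) t =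
      A * (1 - α) * (∏ i ∈ Finset.range k, (1 - α - 1 - i)) * t ^ (1 - α - 1 - k) +
      B * (2 * (1 - α)) * (∏ i ∈ Finset.range k, (2 * (1 - α) - 1 - i)) * t ^ (2 * (1 - α) - 1 - k) :=
    fun k t ht => (itd_eq_on hder k t ht).trans (itd_pair _ _ _ _ k t ht)
  constructor
  · -- CM → 1/2 ≤ α
    intro h
    by_contra hlt
    push_neg at hlt
    have h2α : 0 < 1 - 2 * α := by linarith
    set E : ℝ := A * (1 - α) * α with hE_def
    set D : ℝ := B * (2 * (1 - α)) * (1 - 2 * α) with hD_def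
    have h1α : (0:ℝ) < 1 - α := by linarith
    have hE : 0 < E := mul_pos (mul_pos hA h1α) hα
    have hD : 0 < D := mul_pos (mul_pos hB (by linarith)) h2α
    set t : ℝ := (E / D + 1) ^ (1 - α)⁻¹ with ht_def
    have hEDpos : (0:ℝ) < E / D + 1 := by positivity
    have ht : 0 < t := Real.rpow_pos_of_pos hEDpos _
    have htY : t ^ (1 - α) = E / D + 1 :=
      Real.rpow_inv_rpow hEDpos.le h1α.ne'
    have h1 := h 1 t ht
    rw [key 1 t ht] at h1
    simp only [pow_one, Finset.prod_range_one, Nat.cast_zero, Nat.cast_one, sub_zero] at h1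
    rw [show (1 - α - 1 - 1 : ℝ) = -1 - α by ring,
        show (2 * (1 - α) - 1 - 1 : ℝ) = (-1 - α) + (1 - α) by ring,
        Real.rpow_add ht, htY] at h1
    have hX : 0 < t ^ (-1 - α : ℝ) := Real.rpow_pos_of_pos ht _
    have hDY : D * (E / D + 1) = E + D := by field_simp
    have heq : A * (1 - α) * (1 - α - 1) * t ^ (-1 - α : ℝ) +
        B * (2 * (1 - α)) * (2 * (1 - α) - 1) * (t ^ (-1 - α : ℝ) * (E / D + 1))
        = t ^ (-1 - α : ℝ) * (D * (E / D + 1) - E) := by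
      rw [hE_def, hD_def]; ring
    rw [hDY] at heq
    nlinarith [mul_pos hX hD, heq, h1]
  · -- 1/2 ≤ α → CM
    intro hhalf k t ht
    rw [key k t ht]
    have sign : ∀ (c r : ℝ), 0 ≤ c → r ≤ 0 →
        0 ≤ (-1:ℝ) ^ k * (c * (∏ i ∈ Finset.range k, (r - i)) * t ^ (r - k)) := by
      intro c r hc hr
      have : (-1:ℝ) ^ k * (c * (∏ i ∈ Finset.range k, (r - i)) * t ^ (r - k)) =
          c * ((-1:ℝ) ^ k * ∏ i ∈ Finset.range k, (r - i)) * t ^ (r - k) := by ring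
      rw [this, neg_pow_prod]
      apply mul_nonneg (mul_nonneg hc _) (Real.rpow_nonneg ht.le _)
      apply Finset.prod_nonneg
      intro i _
      have : (0:ℝ) ≤ i := Nat.cast_nonneg i
      linarith
    rw [mul_add]
    exact add_nonneg
      (sign _ _ (mul_pos hA (by linarith)).le (by linarith))
      (sign _ _ (mul_pos hB (by linarith)).le (by linarith))
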